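/- Let n ≥ 4 be an integer, M > 0 and λ > 0 satisfy the nondegeneracy condition, let r_p = ((n-1)M)^{1/(n-3)}, μ̃_p = μ̃(r_p) > 0, and z² = 1. Then 1 - ((n-1)/(n-3)) r_p² λ > 0, and the real 2×2 matrix with rows (0, 2 r_p⁴ μ̃_p) and (2(n-3) r_p^{-4} μ̃_p^{-2} z², 0) — the linearization of the Hamilton flow at the trapped set in the normal coordinates (r - r_p, ξ) — has exactly the two eigenvalues ± 2 r_p ( (n-1) / (1 - ((n-1)/(n-3)) r_p² λ) )^{1/2}. -/

import Mathlib

/-- The rescaled Schwarzschild–de Sitter metric coefficient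
`μ̃(r) = r^{-2} - 2 M r^{1-n} - λ`. -/
noncomputable def mutilde (n : ℕ) (M lam : ℝ) (r : ℝ) : ℝ :=
  r ^ (-2 : ℝ) - 2 * M * r ^ ((1 : ℝ) - (n : ℝ)) - lam

/-- The radius `r_p = ((n-1) M)^{1/(n-3)}` of the photon sphere. -/
noncomputable def rpCrit (n : ℕ) (M : ℝ) : ℝ :=
  (((n : ℝ) - 1) * M) ^ ((1 : ℝ) / ((n : ℝ) - 3))

/-- Eigenvalue characterization for an antidiagonal 2×2 matrix. -/
lemma eig_antidiag (a b c0 : ℝ) (ha : a ≠ 0) (hab : a * b = c0 ^ 2) (c : ℝ) :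
    (∃ v : Fin 2 → ℝ, v ≠ 0 ∧ (!![0, a; b, 0]).mulVec v = c • v) ↔ (c = c0 ∨ c = -c0) := by
  constructor
  · rintro ⟨v, hv, heq⟩
    have h0 : a * v 1 = c * v 0 := by
      have := congrFun heq 0
      simpa [Matrix.mulVec, dotProduct, Fin.sum_univ_two] using this
    have h1 : b * v 0 = c * v 1 := by
      have := congrFun heq 1
      simpa [Matrix.mulVec, dotProduct, Fin.sum_univ_two] using this
    by_cases hv0 : v 0 = 0
    · exfalso
      have hv1 : v 1 = 0 := by
        have : a * v 1 = 0 := by rw [h0, hv0, mul_zero]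
        exact (mul_eq_zero.mp this).resolve_left ha
      apply hv
      funext i
      fin_cases i <;> simpa
    · have hcc : c ^ 2 = c0 ^ 2 := by
        have : c ^ 2 * v 0 = c0 ^ 2 * v 0 := by
          linear_combination (-c) * h0 + (-a) * h1 + v 0 * hab
        exact mul_right_cancel₀ hv0 this
      have : (c - c0) * (c + c0) = 0 := by nlinarith
      rcases mul_eq_zero.mp this with h | h
      · exact Or.inl (by linarith)
      · exact Or.inr (by linarith)
  · rintro (rfl | rfl)
    · refine ⟨![a, c], ?_, ?_⟩
      · intro h
        exact ha (by simpa using congrFun h 0)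
      · funext i
        fin_cases i <;>
          · simp [Matrix.mulVec, dotProduct, Fin.sum_univ_two]
            first | linear_combination hab | ring
    · refine ⟨![a, -c0], ?_, ?_⟩
      · intro h
        exact ha (by simpa using congrFun h 0)
      · funext i
        fin_cases i <;>
          · simp [Matrix.mulVec, dotProduct, Fin.sum_univ_two]
            first | linear_combination hab | ring

theorem stmt10 (n : ℕ) (hn : 4 ≤ n) (M lam : ℝ) (hM : 0 < M) (hlam : 0 < lam)
    (hnd : M ^ 2 * lam ^ ((n : ℝ) - 3)
      < ((n : ℝ) - 3) ^ ((n : ℝ) - 3) / ((n : ℝ) - 1) ^ ((n : ℝ) - 1))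
    (z : ℝ) (hz : z ^ 2 = 1) :
    0 < 1 - (((n : ℝ) - 1) / ((n : ℝ) - 3)) * (rpCrit n M) ^ 2 * lam ∧
    ∀ A : Matrix (Fin 2) (Fin 2) ℝ,
      A = !![0, 2 * (rpCrit n M) ^ 4 * mutilde n M lam (rpCrit n M);
             2 * ((n : ℝ) - 3) * (rpCrit n M) ^ (-4 : ℝ)
               * ((mutilde n M lam (rpCrit n M)) ^ 2)⁻¹ * z ^ 2, 0] →
      ∀ c : ℝ,
        (∃ v : Fin 2 → ℝ, v ≠ 0 ∧ A.mulVec v = c • v) ↔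
          (c = 2 * rpCrit n M
              * Real.sqrt (((n : ℝ) - 1)
                  / (1 - (((n : ℝ) - 1) / ((n : ℝ) - 3)) * (rpCrit n M) ^ 2 * lam))
          ∨ c = -(2 * rpCrit n M
              * Real.sqrt (((n : ℝ) - 1)
                  / (1 - (((n : ℝ) - 1) / ((n : ℝ) - 3)) * (rpCrit n M) ^ 2 * lam)))) := by
  have hN : (4:ℝ) ≤ (n:ℝ) := by exact_mod_cast hn
  set N := (n : ℝ) with hNdef
  have h3 : (0:ℝ) < N - 3 := by linarith
  have h1 : (0:ℝ) < N - 1 := by linarith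
  set R := rpCrit n M with hRdef
  have hRpos : 0 < R := Real.rpow_pos_of_pos (by positivity) _
  have hRne : R ≠ 0 := hRpos.ne'
  have hRpow : R ^ (N - 3) = (N - 1) * M := by
    rw [hRdef, rpCrit, ← Real.rpow_mul (by positivity), one_div,
      inv_mul_cancel₀ h3.ne', Real.rpow_one]
  -- the crucial bound `R^2 * lam < (N-3)/(N-1)`
  have hkey : R ^ 2 * lam < (N - 3) / (N - 1) := by
    by_contra h
    push_neg at h
    have h2 : ((N - 3) / (N - 1)) ^ (N - 3) ≤ (R ^ 2 * lam) ^ (N - 3) :=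
      Real.rpow_le_rpow (by positivity) h h3.le
    have h4 : (R ^ 2 * lam) ^ (N - 3) = (N - 1) ^ 2 * (M ^ 2 * lam ^ (N - 3)) := by
      rw [Real.mul_rpow (by positivity) hlam.le, ← Real.rpow_natCast R 2,
        ← Real.rpow_mul hRpos.le, mul_comm (((2 : ℕ) : ℝ)) (N - 3),
        Real.rpow_mul hRpos.le, hRpow, Real.rpow_natCast, mul_pow]
      ring
    have h5 : ((N - 3) / (N - 1)) ^ (N - 3)
        = (N - 1) ^ 2 * ((N - 3) ^ (N - 3) / (N - 1) ^ (N - 1)) := by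
      rw [Real.div_rpow h3.le h1.le]
      have : (N - 1) ^ (N - 1) = (N - 1) ^ (N - 3) * (N - 1) ^ (2 : ℕ) := by
        rw [← Real.rpow_natCast (N - 1) 2, ← Real.rpow_add h1]
        congr 1
        push_cast
        ring
      rw [this]
      field_simp
    have h6 : (N - 1) ^ 2 * (M ^ 2 * lam ^ (N - 3))
        < (N - 1) ^ 2 * ((N - 3) ^ (N - 3) / (N - 1) ^ (N - 1)) :=
      (mul_lt_mul_iff_right₀ (by positivity)).mpr hnd
    rw [h4] at h2
    rw [h5] at h2
    exact absurd (lt_of_le_of_lt h2 h6) (lt_irrefl _)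
  have hpos1 : 0 < 1 - (N - 1) / (N - 3) * R ^ 2 * lam := by
    have : (N - 1) / (N - 3) * R ^ 2 * lam < (N - 1) / (N - 3) * ((N - 3) / (N - 1)) := by
      rw [mul_assoc]
      exact (mul_lt_mul_iff_right₀ (by positivity)).mpr hkey
    have heq : (N - 1) / (N - 3) * ((N - 3) / (N - 1)) = 1 := by
      field_simp
    linarith [this, heq ▸ this]
  -- value of mutilde at R
  have hR2ne : (R ^ 2 : ℝ) ≠ 0 := by positivity
  have hrm2 : R ^ ((-2 : ℝ)) = (R ^ 2)⁻¹ := by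
    rw [show ((-2 : ℝ)) = -((2 : ℕ) : ℝ) by norm_num, Real.rpow_neg hRpos.le,
      Real.rpow_natCast]
  have hrm4 : R ^ ((-4 : ℝ)) = (R ^ 4)⁻¹ := by
    rw [show ((-4 : ℝ)) = -((4 : ℕ) : ℝ) by norm_num, Real.rpow_neg hRpos.le,
      Real.rpow_natCast]
  have hr1n : R ^ ((1 : ℝ) - N) = (R ^ 2)⁻¹ * ((N - 1) * M)⁻¹ := by
    rw [show (1 : ℝ) - N = (-((2:ℕ):ℝ)) + -(N - 3) by push_cast; ring,
      Real.rpow_add hRpos, Real.rpow_neg hRpos.le, Real.rpow_neg hRpos.le,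
      hRpow, Real.rpow_natCast]
  have hmu : mutilde n M lam R = (N - 3) / (N - 1) * (R ^ 2)⁻¹ - lam := by
    rw [mutilde, hrm2, hr1n]
    field_simp
    ring
  have hmupos : 0 < mutilde n M lam R := by
    rw [hmu]
    have h7 : lam < (N - 3) / (N - 1) * (R ^ 2)⁻¹ := by
      have := (mul_lt_mul_iff_left₀ (inv_pos.mpr (show (0:ℝ) < R ^ 2 by positivity))).mpr hkey
      calc lam = R ^ 2 * lam * (R ^ 2)⁻¹ := by field_simp
        _ < (N - 3) / (N - 1) * (R ^ 2)⁻¹ := this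
    linarith
  have hmune : mutilde n M lam R ≠ 0 := hmupos.ne'
  refine ⟨hpos1, ?_⟩
  intro A hA c
  subst hA
  set μ := mutilde n M lam R with hμdef
  set s := Real.sqrt ((N - 1) / (1 - (N - 1) / (N - 3) * R ^ 2 * lam)) with hsdef
  have hs2 : s ^ 2 = (N - 1) / (1 - (N - 1) / (N - 3) * R ^ 2 * lam) :=
    Real.sq_sqrt (by positivity)
  have ha : (2 * R ^ 4 * μ : ℝ) ≠ 0 := by positivity
  have hDne : (1 - (N - 1) / (N - 3) * R ^ 2 * lam) ≠ 0 := hpos1.ne'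
  have hmu2 : ((N - 3) / (N - 1) * (R ^ 2)⁻¹ - lam) ≠ 0 := by rw [← hmu]; exact hmune
  have hab : (2 * R ^ 4 * μ) * (2 * (N - 3) * R ^ ((-4:ℝ)) * (μ ^ 2)⁻¹ * z ^ 2)
      = (2 * R * s) ^ 2 := by
    rw [hz, hrm4]
    calc (2 * R ^ 4 * μ) * (2 * (N - 3) * (R ^ 4)⁻¹ * (μ ^ 2)⁻¹ * 1)
        = 4 * (N - 3) / μ := by
          field_simp
          ring
      _ = 4 * R ^ 2 * (N - 1) / (1 - (N - 1) / (N - 3) * R ^ 2 * lam) := by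
          rw [hmu, div_eq_div_iff hmu2 hDne]
          field_simp
      _ = (2 * R * s) ^ 2 := by
          rw [mul_pow, mul_pow, hs2]
          ring
  exact eig_antidiag _ _ _ ha hab c
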